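/- Suppose A and B are C*-algebras such that A is separable and B is unital, and suppose φ : A → B is a full *-homomorphism. Then there is a separable closed star-subalgebra B₀ of B which is unital (contains the unit of B) and contains φ(A), such that the corestriction of φ to B₀ is full: for every nonzero a ∈ A, the smallest closed two-sided ideal of B₀ containing φ(a) is all of B₀. -/

import Mathlib

open TopologicalSpace

universe u

section Aux

lemma myListSumMem {R : Type*} [NonUnitalNonAssocRing R] (I : TwoSidedIdeal R)
    (l : List R) (h : ∀ x ∈ l, x ∈ I) : l.sum ∈ I := by
  induction l with
  | nil => simpa using I.zero_mem
  | cons a t ih =>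
    rw [List.sum_cons]
    exact I.add_mem (h a (by simp)) (ih fun x hx => h x (by simp [hx]))

lemma mySumEst {B : Type*} [NonUnitalNormedRing B] (l : List (B × B)) (b b' : B) :
    ‖(l.map fun p => p.1 * b * p.2).sum - (l.map fun p => p.1 * b' * p.2).sum‖
      ≤ (l.map fun p => ‖p.1‖ * ‖p.2‖).sum * ‖b - b'‖ := by
  induction l with
  | nil => simp
  | cons p t ih =>
    simp only [List.map_cons, List.sum_cons]
    rw [add_sub_add_comm, add_mul]
    refine (norm_add_le _ _).trans (add_le_add ?_ ih)
    have h1 : p.1 * b * p.2 - p.1 * b' * p.2 = p.1 * (b - b') * p.2 := by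
      rw [mul_sub, sub_mul]
    rw [h1]
    calc ‖p.1 * (b - b') * p.2‖ ≤ ‖p.1 * (b - b')‖ * ‖p.2‖ := norm_mul_le _ _
    _ ≤ ‖p.1‖ * ‖b - b'‖ * ‖p.2‖ :=
        mul_le_mul_of_nonneg_right (norm_mul_le _ _) (norm_nonneg _)
    _ = ‖p.1‖ * ‖p.2‖ * ‖b - b'‖ := by ring

variable {B : Type u} [CStarAlgebra B]

/-- The set of finite sums `Σ xᵢ b yᵢ`. -/
def myGenSet (b : B) : Set B :=
  {z | ∃ l : List (B × B), (l.map fun p => p.1 * b * p.2).sum = z}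

lemma myGenSet_maps (b : B) {z : B} (hz : z ∈ myGenSet b) :
    (∀ x : B, x * z ∈ myGenSet b) ∧ (∀ y : B, z * y ∈ myGenSet b) ∧ -z ∈ myGenSet b := by
  obtain ⟨l, rfl⟩ := hz
  refine ⟨fun x => ⟨l.map fun p => (x * p.1, p.2), ?_⟩,
    fun y => ⟨l.map fun p => (p.1, p.2 * y), ?_⟩, ⟨l.map fun p => (-p.1, p.2), ?_⟩⟩
  · simpa [List.map_map, Function.comp_def, mul_assoc] using
      List.sum_map_mul_left l (fun p : B × B => p.1 * b * p.2) x
  · simpa [List.map_map, Function.comp_def, mul_assoc] using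
      List.sum_map_mul_right l (fun p : B × B => p.1 * b * p.2) y
  · induction l with
    | nil => simp
    | cons p t ih =>
      simp only [List.map_cons, List.sum_cons]
      rw [ih]
      simp [neg_mul, neg_add, add_comm]

/-- The smallest closed two-sided ideal containing `b`. -/
def myClosedIdeal (b : B) : TwoSidedIdeal B :=
  TwoSidedIdeal.mk' (closure (myGenSet b))
    (subset_closure ⟨[], rfl⟩)
    (fun hx hy => by
      refine map_mem_closure₂ continuous_add hx hy ?_
      rintro u ⟨l, rfl⟩ v ⟨m, rfl⟩
      exact ⟨l ++ m, by simp⟩)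
    (fun hx => map_mem_closure continuous_neg hx fun z hz => (myGenSet_maps b hz).2.2)
    (fun {x y} hy => map_mem_closure (f := fun z => x * z) (continuous_mul_left x) hy
      fun z hz => (myGenSet_maps b hz).1 x)
    (fun {x y} hx => map_mem_closure (f := fun z => z * y) (continuous_mul_right y) hx
      fun z hz => (myGenSet_maps b hz).2.1 y)

lemma mem_myClosedIdeal {b x : B} : x ∈ myClosedIdeal b ↔ x ∈ closure (myGenSet b) :=
  TwoSidedIdeal.mem_mk' _ _ _ _ _ _ _

lemma coe_myClosedIdeal (b : B) : (myClosedIdeal b : Set B) = closure (myGenSet b) :=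
  TwoSidedIdeal.coe_mk' _ _ _ _ _ _

lemma myIsSeparableMonoidClosure {M : Type*} [Monoid M] [TopologicalSpace M]
    [ContinuousMul M] {s : Set M} (hs : IsSeparable s) :
    IsSeparable (Submonoid.closure s : Set M) := by
  have hcont : ∀ n : ℕ, Continuous fun f : Fin n → M => (List.ofFn f).prod := by
    intro n
    induction n with
    | zero => simpa using continuous_const
    | succ n ih =>
      simp only [List.ofFn_succ, List.prod_cons]
      exact (continuous_apply 0).mul (ih.comp (continuous_pi fun i => continuous_apply _))
  have hsub : (Submonoid.closure s : Set M) ⊆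
      ⋃ n : ℕ, (fun f : Fin n → M => (List.ofFn f).prod) '' {f | ∀ i, f i ∈ s} := by
    intro x hx
    obtain ⟨l, hl, rfl⟩ := Submonoid.exists_list_of_mem_closure hx
    exact Set.mem_iUnion.mpr ⟨l.length, ⟨l.get, fun i => hl _ (l.get_mem i), by
      simp [List.ofFn_get]⟩⟩
  exact IsSeparable.mono (.iUnion fun n => .image (isSeparable_pi fun i => hs) (hcont n)) hsub

end Aux

/-- If `A` is a separable C*-algebra, `B` is a unital C*-algebra, and
`φ : A → B` is a full *-homomorphism (for every nonzero `a`, the smallest closed two-sided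
ideal of `B` containing `φ a` is all of `B`, i.e. every closed two-sided ideal containing
`φ a` is `⊤`), then there is a separable closed unital star-subalgebra `B₀` of `B`
containing `φ(A)` such that the corestriction of `φ` to `B₀` is full. -/
theorem exists_separable_corestriction_full {A B : Type u}
    [NonUnitalCStarAlgebra A] [CStarAlgebra B] [SeparableSpace A]
    (φ : A →⋆ₙₐ[ℂ] B)
    (hfull : ∀ a : A, a ≠ 0 →
      ∀ I : TwoSidedIdeal B, IsClosed (I : Set B) → φ a ∈ I → I = ⊤) :
    ∃ (B₀ : StarSubalgebra ℂ B), IsClosed (B₀ : Set B) ∧ SeparableSpace B₀ ∧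
      ∃ hmem : ∀ a : A, φ a ∈ B₀,
        ∀ a : A, a ≠ 0 →
          ∀ I : TwoSidedIdeal B₀, IsClosed (I : Set B₀) →
            (⟨φ a, hmem a⟩ : B₀) ∈ I → I = ⊤ := by
  classical
  -- Step 1: witnesses from fullness in `B`
  have key : ∀ i : {a : A // a ≠ 0}, ∃ l : List (B × B),
      ‖(1 : B) - (l.map fun p => p.1 * φ i.1 * p.2).sum‖ < 1/2 := by
    intro i
    have h1 : myClosedIdeal (φ i.1) = ⊤ := by
      refine hfull i.1 i.2 _ ?_ ?_
      · rw [coe_myClosedIdeal]; exact isClosed_closure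
      · rw [mem_myClosedIdeal]
        exact subset_closure ⟨[((1 : B), (1 : B))], by simp⟩
    have h2 : (1 : B) ∈ closure (myGenSet (φ i.1)) := by
      rw [← mem_myClosedIdeal, h1]; exact TwoSidedIdeal.mem_top B
    rw [Metric.mem_closure_iff] at h2
    obtain ⟨z, ⟨l, rfl⟩, hz⟩ := h2 (1/2) (by norm_num)
    exact ⟨l, by rwa [dist_eq_norm] at hz⟩
  choose L hL using key
  set C : {a : A // a ≠ 0} → ℝ := fun i => ((L i).map fun p => ‖p.1‖ * ‖p.2‖).sum with hCdef
  have hC0 : ∀ i, 0 ≤ C i := fun i => List.sum_nonneg (by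
    rintro x hx
    obtain ⟨p, -, rfl⟩ := List.mem_map.mp hx
    positivity)
  set r : {a : A // a ≠ 0} → ℝ := fun i => (1/2) / (C i + 1) with hrdef
  have hr : ∀ i, 0 < r i := fun i => div_pos (by norm_num) (by linarith [hC0 i])
  -- Step 2: Lindelöf
  haveI : SecondCountableTopology A := UniformSpace.secondCountable_of_separable A
  obtain ⟨T, hTc, hTU⟩ := TopologicalSpace.isOpen_iUnion_countable
    (fun i : {a : A // a ≠ 0} => Metric.ball i.1 (r i)) (fun i => Metric.isOpen_ball)
  -- Step 3: the separable subalgebra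
  have hφc : Continuous φ := AddMonoidHomClass.continuous_of_bound φ 1
    (fun a => by simpa using NonUnitalStarAlgHom.norm_apply_le φ a)
  set W : Set B := ⋃ i ∈ T,
      ((fun p : B × B => p.1) '' {p | p ∈ L i} ∪ (fun p : B × B => p.2) '' {p | p ∈ L i}) with hWdef
  have hWc : W.Countable := hTc.biUnion fun i _ =>
    (((L i).finite_toSet.image _).union ((L i).finite_toSet.image _)).countable
  set s : Set B := Set.range φ ∪ W with hsdef
  have hssep : IsSeparable s := (isSeparable_range hφc).union hWc.isSeparable
  set B₀ : StarSubalgebra ℂ B := (StarAlgebra.adjoin ℂ s).topologicalClosure with hB₀def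
  have hclosed : IsClosed (B₀ : Set B) := StarSubalgebra.isClosed_topologicalClosure _
  -- separability of B₀
  have hsep : IsSeparable (B₀ : Set B) := by
    have hstar : IsSeparable (star s) := by
      refine (hssep.image continuous_star).mono fun x hx => ?_
      exact ⟨star x, hx, star_star x⟩
    have h2 : IsSeparable (Submonoid.closure (s ∪ star s) : Set B) :=
      myIsSeparableMonoidClosure (hssep.union hstar)
    have h3 : IsSeparable
        (Submodule.span ℂ ((Submonoid.closure (s ∪ star s) : Set B)) : Set B) := h2.span
    have h4 : ((StarAlgebra.adjoin ℂ s : StarSubalgebra ℂ B) : Set B) =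
        (Submodule.span ℂ ((Submonoid.closure (s ∪ star s) : Set B)) : Set B) :=
      congrArg (fun p : Submodule ℂ B => (p : Set B)) (StarAlgebra.adjoin_eq_span s)
    have h5 : (B₀ : Set B) = closure (StarAlgebra.adjoin ℂ s : Set B) :=
      StarSubalgebra.topologicalClosure_coe _
    rw [h5, h4]
    exact h3.closure
  haveI hsepB₀ : SeparableSpace B₀ := hsep.separableSpace
  have hmem : ∀ a : A, φ a ∈ B₀ := fun a =>
    (StarSubalgebra.le_topologicalClosure _)
      (StarAlgebra.subset_adjoin ℂ s (Or.inl ⟨a, rfl⟩))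
  refine ⟨B₀, hclosed, hsepB₀, hmem, ?_⟩
  -- Step 4: fullness of the corestriction
  intro a ha I hIc hIa
  have hmema : a ∈ ⋃ i ∈ T, Metric.ball i.1 (r i) := by
    rw [hTU]
    exact Set.mem_iUnion.mpr ⟨⟨a, ha⟩, Metric.mem_ball_self (hr _)⟩
  obtain ⟨i, hiT, hai⟩ := Set.mem_iUnion₂.mp hmema
  have hw1 : ∀ p ∈ L i, p.1 ∈ B₀ := fun p hp =>
    (StarSubalgebra.le_topologicalClosure _) (StarAlgebra.subset_adjoin ℂ s
      (Or.inr (Set.mem_iUnion₂.mpr ⟨i, hiT, Or.inl ⟨p, hp, rfl⟩⟩)))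
  have hw2 : ∀ p ∈ L i, p.2 ∈ B₀ := fun p hp =>
    (StarSubalgebra.le_topologicalClosure _) (StarAlgebra.subset_adjoin ℂ s
      (Or.inr (Set.mem_iUnion₂.mpr ⟨i, hiT, Or.inr ⟨p, hp, rfl⟩⟩)))
  set x₀ : B₀ := ⟨φ a, hmem a⟩ with hx₀def
  set l' : List (B₀ × B₀) := (L i).attach.map
    (fun q => (⟨q.1.1, hw1 _ q.2⟩, ⟨q.1.2, hw2 _ q.2⟩)) with hl'def
  set j : B₀ := (l'.map fun q => q.1 * x₀ * q.2).sum with hjdef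
  have hjI : j ∈ I := by
    refine myListSumMem I _ ?_
    rintro z hz
    obtain ⟨q, -, rfl⟩ := List.mem_map.mp hz
    exact I.mul_mem_right _ _ (I.mul_mem_left _ _ hIa)
  have hjcoe : (j : B) = ((L i).map fun p => p.1 * φ a * p.2).sum := by
    have hcoesum : ∀ m : List B₀, ((m.sum : B₀) : B) = (m.map Subtype.val).sum := by
      intro m
      induction m with
      | nil => simp
      | cons u t ih => simp [ih]
    rw [hjdef, hcoesum, hl'def, List.map_map, List.map_map]
    rw [← List.attach_map_val (l := L i) (f := fun p => p.1 * φ a * p.2)]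
    rfl
  have hnorm : ‖(1 : B₀) - j‖ < 1 := by
    have hEq : ‖(1 : B₀) - j‖ = ‖(1 : B) - (j : B)‖ := rfl
    rw [hEq]
    have htri : ‖(1 : B) - (j : B)‖ ≤
        ‖(1 : B) - ((L i).map fun p => p.1 * φ i.1 * p.2).sum‖ +
        ‖((L i).map fun p => p.1 * φ i.1 * p.2).sum - (j : B)‖ := by
      simpa [dist_eq_norm] using dist_triangle (1 : B)
        (((L i).map fun p => p.1 * φ i.1 * p.2).sum) (j : B)
    have hbd : ‖((L i).map fun p => p.1 * φ i.1 * p.2).sum - (j : B)‖ ≤ C i * ‖i.1 - a‖ := by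
      rw [hjcoe]
      calc ‖((L i).map fun p => p.1 * φ i.1 * p.2).sum -
            ((L i).map fun p => p.1 * φ a * p.2).sum‖
          ≤ C i * ‖φ i.1 - φ a‖ := mySumEst (L i) (φ i.1) (φ a)
        _ = C i * ‖φ (i.1 - a)‖ := by rw [map_sub]
        _ ≤ C i * ‖i.1 - a‖ := mul_le_mul_of_nonneg_left
            (NonUnitalStarAlgHom.norm_apply_le φ _) (hC0 i)
    have hdist : ‖i.1 - a‖ ≤ r i := by
      rw [← dist_eq_norm, dist_comm]
      exact le_of_lt (Metric.mem_ball.mp hai)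
    have hCr : C i * r i < 1/2 := by
      have h1 : (0:ℝ) < C i + 1 := by linarith [hC0 i]
      have h2 : r i = (1/2) / (C i + 1) := rfl
      have h3 : (C i + 1) * (C i + 1)⁻¹ = 1 := mul_inv_cancel₀ h1.ne'
      have h4 : (0:ℝ) < (C i + 1)⁻¹ := inv_pos.mpr h1
      rw [h2, div_eq_mul_inv]
      nlinarith
    have h2 : C i * ‖i.1 - a‖ ≤ C i * r i := mul_le_mul_of_nonneg_left hdist (hC0 i)
    have := hL i
    linarith [htri, hbd]
  haveI : CompleteSpace B₀ := hclosed.completeSpace_coe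
  have hj_unit : IsUnit j := by
    have := (Units.oneSub ((1 : B₀) - j) hnorm).isUnit
    rwa [Units.val_oneSub, sub_sub_cancel] at this
  obtain ⟨u, hu⟩ := hj_unit
  have h1I : (1 : B₀) ∈ I := by
    have h := I.mul_mem_left (↑u⁻¹) j hjI
    rwa [← hu, Units.inv_mul] at h
  exact I.eq_top h1I
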